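/- arXiv:1701.08506 — 4 statements merged into one kernel-verified Lean document; each statement's English description precedes it below -/
import Mathlib

section
/- For t an even positive integer, Cay(ℤ, ±{1, 2, 4, 6, ..., 2t}) admits a decomposition into t+1 edge-disjoint two-way-infinite Hamilton paths. -/
/-- Infinite circulant graph on ℤ: `u ~ v` iff `u - v ∈ S` or `v - u ∈ S`. -/
def cay (S : Set ℤ) : SimpleGraph ℤ where
  Adj u v := u ≠ v ∧ (u - v ∈ S ∨ v - u ∈ S)
  symm := by
    constructor
    intro u v h
    exact ⟨h.1.symm, h.2.symm⟩
  loopless := by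
    constructor
    intro v h
    exact h.1 rfl

/-- `H` is a two-way-infinite Hamilton path of `G`: a connected spanning subgraph
in which every vertex has degree 2. -/
def IsHamPath (G H : SimpleGraph ℤ) : Prop :=
  H ≤ G ∧ H.Connected ∧ ∀ v : ℤ, (H.neighborSet v).ncard = 2

/-- `G` decomposes into `k` edge-disjoint two-way-infinite Hamilton paths. -/
def HamDecomp (G : SimpleGraph ℤ) (k : ℕ) : Prop :=
  ∃ D : Fin k → SimpleGraph ℤ,
    (∀ i, IsHamPath G (D i)) ∧
    (∀ i j, i ≠ j → Disjoint (D i).edgeSet (D j).edgeSet) ∧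
    ∀ e ∈ G.edgeSet, ∃ i, e ∈ (D i).edgeSet

namespace Stmt15

def g (m r : ℤ) : ℤ := if r % 2 = 1 then r else if r = 0 then 0 else 2*m+1-r

def f (m n : ℤ) : ℤ := m * (n / m) + g m (n % m)

def EdgeOK (m i u v : ℤ) : Prop :=
  (v = u + 1 ∧ (u - i) % m = 0) ∨
  ∃ j : ℤ, 1 ≤ j ∧ j ≤ m - 1 ∧ v = u + 2*j ∧
    ((j % 2 = 0 ∧ (u - i - (m - j)) % m = 0) ∨ (j % 2 = 1 ∧ (u - i - (m - j) - 1) % m = 0))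

def rel (m i u v : ℤ) : Prop := ∃ n : ℤ, u = f m n + i ∧ v = f m (n+1) + i

def D (m i : ℤ) : SimpleGraph ℤ := SimpleGraph.fromRel (rel m i)

lemma g_odd (m r : ℤ) (h : r % 2 = 1) : g m r = r := by simp [g, h]

lemma g_zero (m : ℤ) : g m 0 = 0 := by norm_num [g]

lemma g_even (m r : ℤ) (h : r % 2 = 0) (h0 : r ≠ 0) : g m r = 2*m+1-r := by
  unfold g
  rw [if_neg (by omega), if_neg h0]

lemma g_bound (m r : ℤ) (hm : 3 ≤ m) (h0 : 0 ≤ r) (h1 : r < m) : 0 ≤ g m r ∧ g m r < 2*m := by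
  unfold g; split_ifs <;> omega

lemma f_apply (m : ℤ) (hm : 0 < m) (q r : ℤ) (h0 : 0 ≤ r) (h1 : r < m) :
    f m (m*q + r) = m*q + g m r := by
  unfold f
  have hd : (m*q + r) / m = q := by
    rw [add_comm, Int.add_mul_ediv_left r q (by omega : m ≠ 0),
      Int.ediv_eq_zero_of_lt h0 h1, zero_add]
  have he : (m*q + r) % m = r := by
    rw [add_comm, Int.add_mul_emod_self_left, Int.emod_eq_of_lt h0 h1]
  rw [hd, he]

lemma emod_zero_of_eq_mul (m q X : ℤ) (h : X = m * q) : X % m = 0 := by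
  rw [h]; exact Int.mul_emod_right m q

lemma eq_of_emod_eq (m x y : ℤ) (hm : 0 < m) (h1 : x % m = 0) (h2 : y % m = 0)
    (hb1 : -m < x - y) (hb2 : x - y < m) : x = y := by
  obtain ⟨a, ha⟩ := Int.dvd_of_emod_eq_zero h1
  obtain ⟨b, hb⟩ := Int.dvd_of_emod_eq_zero h2
  have hxy : x - y = m * (a - b) := by rw [ha, hb]; ring
  rw [hxy] at hb1 hb2
  have h3 : a - b = 0 := by
    rcases lt_trichotomy (a-b) 0 with h|h|h
    · nlinarith
    · exact h
    · nlinarith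
  rw [h3, mul_zero] at hxy
  omega

lemma f_inj (m : ℤ) (hm : 3 ≤ m) (hm2 : m % 2 = 1) : Function.Injective (f m) := by
  intro a b hab
  have h1 := Int.mul_ediv_add_emod a m
  have h2 := Int.mul_ediv_add_emod b m
  have hr1 : 0 ≤ a % m := Int.emod_nonneg a (by omega)
  have hr1' : a % m < m := Int.emod_lt_of_pos a (by omega)
  have hr2 : 0 ≤ b % m := Int.emod_nonneg b (by omega)
  have hr2' : b % m < m := Int.emod_lt_of_pos b (by omega)
  unfold f at hab
  set q1 := a / m with hq1
  set r1 := a % m with hrr1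
  set q2 := b / m with hq2
  set r2 := b % m with hrr2
  have hb1 := g_bound m r1 hm hr1 hr1'
  have hb2 := g_bound m r2 hm hr2 hr2'
  have key : m * (q1 - q2) = g m r2 - g m r1 := by linear_combination hab
  have hd : q1 - q2 = -1 ∨ q1 - q2 = 0 ∨ q1 - q2 = 1 := by
    rcases lt_trichotomy (q1 - q2) 0 with h|h|h
    · have : -2 < q1 - q2 := by nlinarith
      omega
    · right; left; exact h
    · have : q1 - q2 < 2 := by nlinarith
      omega
  have hr : r1 = r2 ∧ q1 = q2 := by
    rcases hd with h|h|h
    · exfalso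
      rw [h] at key
      unfold g at key
      split_ifs at key <;> omega
    · refine ⟨?_, by omega⟩
      have hg : g m r1 = g m r2 := by rw [h, mul_zero] at key; omega
      unfold g at hg; split_ifs at hg <;> omega
    · exfalso
      rw [h, mul_one] at key
      unfold g at key
      split_ifs at key <;> omega
  have : m * q1 = m * q2 := by rw [hr.2]
  omega

lemma f_surj (m : ℤ) (hm : 3 ≤ m) (hm2 : m % 2 = 1) : Function.Surjective (f m) := by
  intro v
  have h1 := Int.mul_ediv_add_emod v m
  have hr0 : 0 ≤ v % m := Int.emod_nonneg v (by omega)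
  have hr1 : v % m < m := Int.emod_lt_of_pos v (by omega)
  set q := v / m with hq
  set r := v % m with hr
  by_cases hodd : r % 2 = 1
  · refine ⟨m*q + r, ?_⟩
    rw [f_apply m (by omega) q r hr0 hr1, g_odd m r hodd]
    omega
  by_cases hz : r = 0
  · refine ⟨m*q + 0, ?_⟩
    rw [f_apply m (by omega) q 0 le_rfl (by omega), g_zero]
    omega
  · refine ⟨m*(q-1) + (m+1-r), ?_⟩
    rw [f_apply m (by omega) (q-1) (m+1-r) (by omega) (by omega),
      g_even m (m+1-r) (by omega) (by omega)]
    have : m*(q-1) = m*q - m := by ring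
    omega

lemma edge_form (m : ℤ) (hm : 3 ≤ m) (hm2 : m % 2 = 1) (i n : ℤ) :
    EdgeOK m i (f m n + i) (f m (n+1) + i) ∨ EdgeOK m i (f m (n+1) + i) (f m n + i) := by
  have h1 := Int.mul_ediv_add_emod n m
  have hr0 : 0 ≤ n % m := Int.emod_nonneg n (by omega)
  have hr1 : n % m < m := Int.emod_lt_of_pos n (by omega)
  set q := n / m with hq
  set r := n % m with hr
  have hn : n = m * q + r := by linarith
  have hfn : f m n = m * q + g m r := by rw [hn, f_apply m (by omega) q r hr0 hr1]
  by_cases hodd : r % 2 = 1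
  · have hrm : r ≤ m - 2 := by omega
    have hfn1 : f m (n+1) = m*q + (2*m - r) := by
      have h' : n + 1 = m*q + (r+1) := by rw [hn]; ring
      rw [h', f_apply m (by omega) q (r+1) (by omega) (by omega),
        g_even m (r+1) (by omega) (by omega)]
      ring
    left
    unfold EdgeOK
    rw [hfn, hfn1, g_odd m r hodd]
    right
    refine ⟨m - r, by omega, by omega, by ring, Or.inl ⟨by omega, ?_⟩⟩
    exact emod_zero_of_eq_mul m q _ (by ring)
  by_cases hz : r = 0
  · have hfn1 : f m (n+1) = m*q + 1 := by
      have h' : n + 1 = m*q + 1 := by rw [hn, hz]; ring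
      rw [h', f_apply m (by omega) q 1 (by omega) (by omega), g_odd m 1 (by norm_num)]
    left
    unfold EdgeOK
    rw [hfn, hfn1, hz, g_zero]
    left
    exact ⟨by ring, emod_zero_of_eq_mul m q _ (by ring)⟩
  by_cases hlast : r = m - 1
  · have hfn1 : f m (n+1) = m*(q+1) := by
      have h' : n + 1 = m*(q+1) + 0 := by rw [hn, hlast]; ring
      rw [h', f_apply m (by omega) (q+1) 0 le_rfl (by omega), g_zero, add_zero]
    right
    unfold EdgeOK
    rw [hfn, hfn1, g_even m r (by omega) hz]
    right
    refine ⟨1, le_rfl, by omega, ?_, Or.inr ⟨by norm_num, ?_⟩⟩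
    · rw [hlast]; ring
    · exact emod_zero_of_eq_mul m q _ (by ring)
  · have hfn1 : f m (n+1) = m*q + (r+1) := by
      have h' : n + 1 = m*q + (r+1) := by rw [hn]; ring
      rw [h', f_apply m (by omega) q (r+1) (by omega) (by omega), g_odd m (r+1) (by omega)]
    right
    unfold EdgeOK
    rw [hfn, hfn1, g_even m r (by omega) hz]
    right
    refine ⟨m - r, by omega, by omega, by ring, Or.inr ⟨by omega, ?_⟩⟩
    exact emod_zero_of_eq_mul m q _ (by ring)

lemma edge_exists (m : ℤ) (hm : 3 ≤ m) (hm2 : m % 2 = 1) (i u v : ℤ) (h : EdgeOK m i u v) :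
    ∃ n : ℤ, (u = f m n + i ∧ v = f m (n+1) + i) ∨ (v = f m n + i ∧ u = f m (n+1) + i) := by
  rcases h with ⟨hv, hmod⟩ | ⟨j, hj1, hj2, hv, hcase⟩
  · obtain ⟨q, hq⟩ := Int.dvd_of_emod_eq_zero hmod
    refine ⟨m*q, Or.inl ⟨?_, ?_⟩⟩
    · have h1 : f m (m*q + 0) = m*q + g m 0 := f_apply m (by omega) q 0 le_rfl (by omega)
      rw [g_zero] at h1
      rw [show m*q = m*q+0 by ring, h1]
      omega
    · have h1 : f m (m*q + 1) = m*q + g m 1 := f_apply m (by omega) q 1 (by omega) (by omega)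
      rw [g_odd m 1 (by norm_num)] at h1
      rw [show m*q+1 = m*q+0+1 by ring] at h1
      rw [show m*q = m*q+0 by ring, h1]
      omega
  · rcases hcase with ⟨hje, hmod⟩ | ⟨hjo, hmod⟩
    · obtain ⟨q, hq⟩ := Int.dvd_of_emod_eq_zero hmod
      refine ⟨m*q + (m - j), Or.inl ⟨?_, ?_⟩⟩
      · have h1 : f m (m*q + (m-j)) = m*q + (m-j) := by
          rw [f_apply m (by omega) q (m-j) (by omega) (by omega), g_odd m (m-j) (by omega)]
        rw [h1]; omega
      · have h1 : f m (m*q + (m-j) + 1) = m*q + (2*m - (m - j)) := by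
          rw [show m*q + (m-j) + 1 = m*q + (m-j+1) by ring,
            f_apply m (by omega) q (m-j+1) (by omega) (by omega),
            g_even m (m-j+1) (by omega) (by omega)]
          ring
        rw [h1]; omega
    · obtain ⟨q, hq⟩ := Int.dvd_of_emod_eq_zero hmod
      by_cases hj' : j = 1
      · refine ⟨m*q + (m-1), Or.inr ⟨?_, ?_⟩⟩
        · have h1 : f m (m*q + (m-1)) = m*q + (m+2) := by
            rw [f_apply m (by omega) q (m-1) (by omega) (by omega),
              g_even m (m-1) (by omega) (by omega)]
            ring
          rw [h1]; omega
        · have h1 : f m (m*q + (m-1) + 1) = m*q + m := by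
            rw [show m*q + (m-1) + 1 = m*(q+1) + 0 by ring,
              f_apply m (by omega) (q+1) 0 le_rfl (by omega), g_zero]
            ring
          rw [h1]; omega
      · refine ⟨m*q + (m-j), Or.inr ⟨?_, ?_⟩⟩
        · have h1 : f m (m*q + (m-j)) = m*q + (m + j + 1) := by
            rw [f_apply m (by omega) q (m-j) (by omega) (by omega),
              g_even m (m-j) (by omega) (by omega)]
            ring
          rw [h1]; omega
        · have h1 : f m (m*q + (m-j) + 1) = m*q + (m-j+1) := by
            rw [show m*q + (m-j) + 1 = m*q + (m-j+1) by ring,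
              f_apply m (by omega) q (m-j+1) (by omega) (by omega),
              g_odd m (m-j+1) (by omega)]
          rw [h1]; omega

lemma edgeOK_lt (m i u v : ℤ) (hm : 3 ≤ m) (h : EdgeOK m i u v) : u < v := by
  rcases h with ⟨hv, _⟩ | ⟨j, hj1, _, hv, _⟩ <;> omega

lemma edgeOK_unique (m i i' u v : ℤ) (hm : 3 ≤ m) (h : EdgeOK m i u v) (h' : EdgeOK m i' u v)
    (hb1 : -m < i - i') (hb2 : i - i' < m) : i = i' := by
  rcases h with ⟨hv, hmod⟩ | ⟨j, hj1, hj2, hv, hc⟩ <;>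
    rcases h' with ⟨hv', hmod'⟩ | ⟨j', hj1', hj2', hv', hc'⟩
  · have := eq_of_emod_eq m (u - i) (u - i') (by omega) hmod hmod' (by omega) (by omega)
    omega
  · omega
  · omega
  · have hj : j = j' := by omega
    subst hj
    rcases hc with ⟨hp, hmod⟩ | ⟨hp, hmod⟩ <;> rcases hc' with ⟨hp', hmod'⟩ | ⟨hp', hmod'⟩
    · have := eq_of_emod_eq m _ _ (by omega : (0:ℤ) < m) hmod hmod' (by omega) (by omega)
      omega
    · omega
    · omega
    · have := eq_of_emod_eq m _ _ (by omega : (0:ℤ) < m) hmod hmod' (by omega) (by omega)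
      omega

lemma adj_iff (m : ℤ) (hm : 3 ≤ m) (hm2 : m % 2 = 1) (i u v : ℤ) :
    (D m i).Adj u v ↔ (EdgeOK m i u v ∨ EdgeOK m i v u) := by
  unfold D
  rw [SimpleGraph.fromRel_adj]
  constructor
  · rintro ⟨hne, ⟨n, rfl, rfl⟩ | ⟨n, rfl, rfl⟩⟩
    · exact edge_form m hm hm2 i n
    · exact (edge_form m hm hm2 i n).symm
  · intro h
    have hne : u ≠ v := by
      rcases h with h|h
      · exact ne_of_lt (edgeOK_lt m i u v hm h)
      · exact (ne_of_lt (edgeOK_lt m i v u hm h)).symm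
    refine ⟨hne, ?_⟩
    rcases h with h|h
    · obtain ⟨n, hn⟩ := edge_exists m hm hm2 i u v h
      rcases hn with ⟨h1,h2⟩|⟨h1,h2⟩
      · exact Or.inl ⟨n, h1, h2⟩
      · exact Or.inr ⟨n, h1, h2⟩
    · obtain ⟨n, hn⟩ := edge_exists m hm hm2 i v u h
      rcases hn with ⟨h1,h2⟩|⟨h1,h2⟩
      · exact Or.inr ⟨n, h1, h2⟩
      · exact Or.inl ⟨n, h1, h2⟩

lemma adj_step (m : ℤ) (hm : 3 ≤ m) (hm2 : m % 2 = 1) (i n : ℤ) :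
    (D m i).Adj (f m n + i) (f m (n+1) + i) := by
  unfold D
  rw [SimpleGraph.fromRel_adj]
  refine ⟨?_, Or.inl ⟨n, rfl, rfl⟩⟩
  intro hcon
  have : n = n + 1 := f_inj m hm hm2 (by omega)
  omega

lemma connected (m : ℤ) (hm : 3 ≤ m) (hm2 : m % 2 = 1) (i : ℤ) : (D m i).Connected := by
  have hstep := adj_step m hm hm2 i
  have key : ∀ b : ℤ, (D m i).Reachable (f m 0 + i) (f m b + i) := by
    intro b
    induction b using Int.induction_on with
    | zero => exact SimpleGraph.Reachable.refl _
    | succ k ih => exact ih.trans (hstep k).reachable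
    | pred k ih =>
        have h2 := hstep (-(k:ℤ) - 1)
        rw [show -(k:ℤ) - 1 + 1 = -(k:ℤ) by ring] at h2
        exact ih.trans h2.symm.reachable
  refine ⟨?_⟩
  intro u v
  obtain ⟨a, ha⟩ := f_surj m hm hm2 (u - i)
  obtain ⟨b, hb⟩ := f_surj m hm hm2 (v - i)
  have hu : u = f m a + i := by omega
  have hv : v = f m b + i := by omega
  rw [hu, hv]
  exact (key a).symm.trans (key b)

lemma degree_two (m : ℤ) (hm : 3 ≤ m) (hm2 : m % 2 = 1) (i v : ℤ) :
    ((D m i).neighborSet v).ncard = 2 := by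
  obtain ⟨n, hn⟩ := f_surj m hm hm2 (v - i)
  have hinj := f_inj m hm hm2
  have hv : v = f m n + i := by omega
  have hset : (D m i).neighborSet v = {f m (n-1) + i, f m (n+1) + i} := by
    ext w
    simp only [SimpleGraph.mem_neighborSet, Set.mem_insert_iff, Set.mem_singleton_iff]
    unfold D
    rw [SimpleGraph.fromRel_adj]
    constructor
    · rintro ⟨hne, ⟨n', h1, h2⟩ | ⟨n', h1, h2⟩⟩
      · have he : n' = n := hinj (by omega)
        subst he
        exact Or.inr h2
      · have he : n' + 1 = n := hinj (by omega)
        left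
        rw [show n - 1 = n' from by omega]
        exact h1
    · rintro (rfl | rfl)
      · refine ⟨?_, Or.inr ⟨n - 1, rfl, ?_⟩⟩
        · intro hcon
          have : n - 1 = n := hinj (by omega)
          omega
        · rw [show n - 1 + 1 = n from by ring]
          exact hv
      · refine ⟨?_, Or.inl ⟨n, hv, rfl⟩⟩
        intro hcon
        have : n + 1 = n := hinj (by omega)
        omega
  have hne2 : f m (n-1) + i ≠ f m (n+1) + i := by
    intro hcon
    have : n - 1 = n + 1 := hinj (by omega)
    omega
  rw [hset]
  exact Set.ncard_pair hne2

lemma edgeOK_diff (m i u v : ℤ) (h : EdgeOK m i u v) :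
    v - u = 1 ∨ ∃ j : ℤ, 1 ≤ j ∧ j ≤ m - 1 ∧ v - u = 2*j := by
  rcases h with ⟨hv, _⟩ | ⟨j, hj1, hj2, hv, _⟩
  · left; omega
  · right; exact ⟨j, hj1, hj2, by omega⟩

lemma cover (m : ℤ) (hm : 3 ≤ m) (hm2 : m % 2 = 1) (u d : ℤ)
    (hd : d = 1 ∨ ∃ j : ℤ, 1 ≤ j ∧ j ≤ m - 1 ∧ d = 2*j) :
    ∃ i : ℤ, 0 ≤ i ∧ i < m ∧ EdgeOK m i u (u + d) := by
  rcases hd with rfl | ⟨j, hj1, hj2, rfl⟩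
  · refine ⟨u % m, Int.emod_nonneg u (by omega), Int.emod_lt_of_pos u (by omega),
      Or.inl ⟨rfl, ?_⟩⟩
    rw [Int.sub_emod, Int.emod_emod_of_dvd u dvd_rfl, sub_self, Int.zero_emod]
  · by_cases hp : j % 2 = 0
    · refine ⟨(u - (m - j)) % m, Int.emod_nonneg _ (by omega), Int.emod_lt_of_pos _ (by omega),
        Or.inr ⟨j, hj1, hj2, rfl, Or.inl ⟨hp, ?_⟩⟩⟩
      rw [show u - (u - (m - j)) % m - (m - j) = (u - (m-j)) - (u - (m-j)) % m by ring,
        Int.sub_emod, Int.emod_emod_of_dvd _ dvd_rfl, sub_self, Int.zero_emod]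
    · refine ⟨(u - (m - j) - 1) % m, Int.emod_nonneg _ (by omega), Int.emod_lt_of_pos _ (by omega),
        Or.inr ⟨j, hj1, hj2, rfl, Or.inr ⟨by omega, ?_⟩⟩⟩
      rw [show u - (u - (m - j) - 1) % m - (m - j) - 1
          = (u - (m-j) - 1) - (u - (m-j) - 1) % m by ring,
        Int.sub_emod, Int.emod_emod_of_dvd _ dvd_rfl, sub_self, Int.zero_emod]

end Stmt15

theorem stmt15 (t : ℕ) (ht : 0 < t) (hte : Even t) :
    HamDecomp (cay {x : ℤ | x = 1 ∨ ∃ j : ℕ, 1 ≤ j ∧ j ≤ t ∧ x = 2 * (j : ℤ)}) (t + 1) := by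
  obtain ⟨s, hs⟩ := hte
  set S : Set ℤ := {x : ℤ | x = 1 ∨ ∃ j : ℕ, 1 ≤ j ∧ j ≤ t ∧ x = 2 * (j : ℤ)} with hS
  set m : ℤ := (t : ℤ) + 1 with hmdef
  have hm : 3 ≤ m := by omega
  have hm2 : m % 2 = 1 := by omega
  have hmemS : ∀ x : ℤ, x ∈ S ↔ (x = 1 ∨ ∃ j : ℤ, 1 ≤ j ∧ j ≤ m - 1 ∧ x = 2*j) := by
    intro x
    rw [hS]
    simp only [Set.mem_setOf_eq]
    constructor
    · rintro (h | ⟨j, h1, h2, h3⟩)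
      · exact Or.inl h
      · exact Or.inr ⟨(j:ℤ), by omega, by omega, by omega⟩
    · rintro (h | ⟨j, h1, h2, h3⟩)
      · exact Or.inl h
      · exact Or.inr ⟨j.toNat, by omega, by omega, by omega⟩
  refine ⟨fun i => Stmt15.D m (i.val : ℤ), ?_, ?_, ?_⟩
  · intro i
    refine ⟨?_, Stmt15.connected m hm hm2 _, fun v => Stmt15.degree_two m hm hm2 _ v⟩
    intro u v hadj
    rw [Stmt15.adj_iff m hm hm2] at hadj
    rcases hadj with h | h
    · refine ⟨ne_of_lt (Stmt15.edgeOK_lt m _ u v hm h), Or.inr ?_⟩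
      rw [hmemS]
      exact Stmt15.edgeOK_diff m _ u v h
    · refine ⟨(ne_of_lt (Stmt15.edgeOK_lt m _ v u hm h)).symm, Or.inl ?_⟩
      rw [hmemS]
      exact Stmt15.edgeOK_diff m _ v u h
  · intro i j hij
    rw [Set.disjoint_left]
    intro e
    induction e using Sym2.ind with
    | _ u v =>
      intro he1 he2
      rw [SimpleGraph.mem_edgeSet] at he1 he2
      rw [Stmt15.adj_iff m hm hm2] at he1 he2
      have hb1 : -m < (i.val : ℤ) - (j.val : ℤ) := by
        have := i.isLt; have := j.isLt; omega
      have hb2 : (i.val : ℤ) - (j.val : ℤ) < m := by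
        have := i.isLt; have := j.isLt; omega
      have hcon : (i.val : ℤ) = (j.val : ℤ) := by
        rcases he1 with h1 | h1 <;> rcases he2 with h2 | h2
        · exact Stmt15.edgeOK_unique m _ _ u v hm h1 h2 hb1 hb2
        · have := Stmt15.edgeOK_lt m _ u v hm h1
          have := Stmt15.edgeOK_lt m _ v u hm h2
          omega
        · have := Stmt15.edgeOK_lt m _ v u hm h1
          have := Stmt15.edgeOK_lt m _ u v hm h2
          omega
        · exact Stmt15.edgeOK_unique m _ _ v u hm h1 h2 hb1 hb2
      exact hij (Fin.ext (by omega))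
  · intro e
    induction e using Sym2.ind with
    | _ u v =>
      intro he
      rw [SimpleGraph.mem_edgeSet] at he
      obtain ⟨hne, hd⟩ := he
      rcases hd with hmem | hmem
      · rw [hmemS] at hmem
        obtain ⟨i₀, h0, h1, hOK⟩ := Stmt15.cover m hm hm2 v (u - v) (by
          rcases hmem with h | ⟨j, hj1, hj2, hj3⟩
          · exact Or.inl h
          · exact Or.inr ⟨j, hj1, hj2, hj3⟩)
        rw [show v + (u - v) = u by ring] at hOK
        refine ⟨⟨i₀.toNat, by omega⟩, ?_⟩
        rw [SimpleGraph.mem_edgeSet, Stmt15.adj_iff m hm hm2]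
        right
        rwa [show ((⟨i₀.toNat, by omega⟩ : Fin (t+1)).val : ℤ) = i₀ from by
          simp only []; omega]
      · rw [hmemS] at hmem
        obtain ⟨i₀, h0, h1, hOK⟩ := Stmt15.cover m hm hm2 u (v - u) (by
          rcases hmem with h | ⟨j, hj1, hj2, hj3⟩
          · exact Or.inl h
          · exact Or.inr ⟨j, hj1, hj2, hj3⟩)
        rw [show u + (v - u) = v by ring] at hOK
        refine ⟨⟨i₀.toNat, by omega⟩, ?_⟩
        rw [SimpleGraph.mem_edgeSet, Stmt15.adj_iff m hm hm2]
        left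
        rwa [show ((⟨i₀.toNat, by omega⟩ : Fin (t+1)).val : ℤ) = i₀ from by
          simp only []; omega]
end

section
/- If a finite path P in Cay(ℤ, S) has endpoints 0 and n, contains exactly one vertex from each congruence class modulo n (with both endpoints in class 0), then the union of the translates P + ni over all i ∈ ℤ is a two-way-infinite Hamilton path in Cay(ℤ, S). -/
/-- Translate of a graph on ℤ by `t`. -/
def shiftGraph (H : SimpleGraph ℤ) (t : ℤ) : SimpleGraph ℤ where
  Adj u v := H.Adj (u - t) (v - t)
  symm := ⟨fun _ _ h => H.adj_symm h⟩
  loopless := ⟨fun _ h => H.irrefl h⟩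

/-- The path graph determined by a list of vertices. -/
def listGraph (l : List ℤ) : SimpleGraph ℤ :=
  SimpleGraph.fromEdgeSet {e | ∃ i : ℕ, i + 1 < l.length ∧ e = s(l.getD i 0, l.getD (i+1) 0)}

namespace Stmt16

/-- The infinite path traversal: `pfun l n (n*q + r) = l[r] + n*q` for `0 ≤ r < n`. -/
def pfun (l : List ℤ) (n k : ℤ) : ℤ := l.getD (k % n).toNat 0 + n * (k / n)

section
variable {S : Set ℤ} {n : ℤ} {l : List ℤ}

lemma len_dropLast (hpos : 0 < n) (hnodup : l.Nodup)
    (hclass : ∀ x : ℤ, ∃! v, v ∈ l.dropLast ∧ v % n = x % n) :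
    l.dropLast.length = n.toNat := by
  have hnd : l.dropLast.Nodup := hnodup.sublist (List.dropLast_sublist l)
  have hmap : (l.dropLast.map (· % n)).Nodup := by
    refine hnd.map_on ?_
    intro x hx y hy hxy
    obtain ⟨v, -, hu⟩ := hclass x
    exact (hu x ⟨hx, rfl⟩).trans (hu y ⟨hy, hxy.symm⟩).symm
  have hset : (l.dropLast.map (· % n)).toFinset = Finset.Ico 0 n := by
    ext z
    simp only [List.mem_toFinset, List.mem_map, Finset.mem_Ico]
    constructor
    · rintro ⟨v, hv, rfl⟩
      exact ⟨Int.emod_nonneg v hpos.ne', Int.emod_lt_of_pos v hpos⟩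
    · rintro ⟨h1, h2⟩
      obtain ⟨v, ⟨hv, hmod⟩, -⟩ := hclass z
      exact ⟨v, hv, by rwa [Int.emod_eq_of_lt h1 h2] at hmod⟩
  have hcard := List.toFinset_card_of_nodup hmap
  rw [hset, Int.card_Ico, List.length_map] at hcard
  omega

lemma aux_ne (hhead : l.head? = some 0) : l ≠ [] := by
  rintro rfl; simp at hhead

lemma aux_len (hpos : 0 < n) (hnodup : l.Nodup)
    (hclass : ∀ x : ℤ, ∃! v, v ∈ l.dropLast ∧ v % n = x % n)
    (hhead : l.head? = some 0) : l.length = n.toNat + 1 := by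
  have h1 := len_dropLast hpos hnodup hclass
  have h2 : l.dropLast.length = l.length - 1 := List.length_dropLast
  have h3 : 0 < l.length := List.length_pos_iff.mpr (aux_ne hhead)
  omega

lemma aux_head (hhead : l.head? = some 0) : l.getD 0 0 = 0 := by
  have hne := aux_ne hhead
  rw [List.getD_eq_getElem l 0 (List.length_pos_iff.mpr hne), List.getElem_zero]
  rw [List.head?_eq_head hne] at hhead
  exact Option.some_injective _ hhead

lemma aux_last (hpos : 0 < n) (hnodup : l.Nodup)
    (hclass : ∀ x : ℤ, ∃! v, v ∈ l.dropLast ∧ v % n = x % n)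
    (hhead : l.head? = some 0) (hlast : l.getLast? = some n) :
    l.getD n.toNat 0 = n := by
  have hne := aux_ne hhead
  have hlen := aux_len hpos hnodup hclass hhead
  rw [show n.toNat = l.length - 1 by omega]
  rw [List.getD_eq_getElem l 0 (by omega)]
  rw [← List.getLast_eq_getElem hne]
  rw [List.getLast?_eq_getLast hne, Option.some_inj] at hlast
  exact hlast

lemma idx_inj (hpos : 0 < n) (hnodup : l.Nodup)
    (hclass : ∀ x : ℤ, ∃! v, v ∈ l.dropLast ∧ v % n = x % n)
    {i j : ℕ} (hi : i < n.toNat) (hj : j < n.toNat)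
    (h : l.getD i 0 % n = l.getD j 0 % n) : i = j := by
  have hdl := len_dropLast hpos hnodup hclass
  have hlen : l.dropLast.length = l.length - 1 := List.length_dropLast
  have hi' : i < l.length := by omega
  have hj' : j < l.length := by omega
  rw [List.getD_eq_getElem l 0 hi', List.getD_eq_getElem l 0 hj'] at h
  have hmi : l[i] ∈ l.dropLast := by
    rw [← List.getElem_dropLast (xs := l) (i := i) (by omega)]; exact List.getElem_mem _
  have hmj : l[j] ∈ l.dropLast := by
    rw [← List.getElem_dropLast (xs := l) (i := j) (by omega)]; exact List.getElem_mem _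
  obtain ⟨v, -, hu⟩ := hclass (l[i]'hi')
  have he : l[i]'hi' = l[j]'hj' := (hu _ ⟨hmi, rfl⟩).trans (hu _ ⟨hmj, h.symm⟩).symm
  exact (List.Nodup.getElem_inj_iff hnodup).mp he

lemma pfun_val (hpos : 0 < n) (q r : ℤ) (h1 : 0 ≤ r) (h2 : r < n) :
    pfun l n (n * q + r) = l.getD r.toNat 0 + n * q := by
  unfold pfun
  rw [add_comm (n*q) r, Int.add_mul_emod_self_left, Int.emod_eq_of_lt h1 h2,
      Int.add_mul_ediv_left _ _ hpos.ne', Int.ediv_eq_zero_of_lt h1 h2, zero_add]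

lemma pfun_inj (hpos : 0 < n) (hnodup : l.Nodup)
    (hclass : ∀ x : ℤ, ∃! v, v ∈ l.dropLast ∧ v % n = x % n) :
    Function.Injective (pfun l n) := by
  intro k k' h
  have hb1 : 0 ≤ k % n := Int.emod_nonneg k hpos.ne'
  have hb2 : k % n < n := Int.emod_lt_of_pos k hpos
  have hb3 : 0 ≤ k' % n := Int.emod_nonneg k' hpos.ne'
  have hb4 : k' % n < n := Int.emod_lt_of_pos k' hpos
  unfold pfun at h
  have hmod : l.getD (k % n).toNat 0 % n = l.getD (k' % n).toNat 0 % n := by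
    have := congrArg (· % n) h
    simpa [Int.add_mul_emod_self_left] using this
  have hidx := idx_inj hpos hnodup hclass (by omega) (by omega) hmod
  have hr : k % n = k' % n := by omega
  have hq : k / n = k' / n := by
    rw [hr] at h
    have := add_left_cancel h
    exact mul_left_cancel₀ hpos.ne' this
  calc k = n * (k / n) + k % n := (Int.mul_ediv_add_emod k n).symm
    _ = n * (k' / n) + k' % n := by rw [hq, hr]
    _ = k' := Int.mul_ediv_add_emod k' n

lemma pfun_surj (hpos : 0 < n) (hnodup : l.Nodup)
    (hclass : ∀ x : ℤ, ∃! v, v ∈ l.dropLast ∧ v % n = x % n) :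
    Function.Surjective (pfun l n) := by
  intro x
  obtain ⟨v, ⟨hv, hmod⟩, -⟩ := hclass x
  obtain ⟨j, hj, hvj⟩ := List.mem_iff_getElem.mp hv
  have hdl := len_dropLast hpos hnodup hclass
  have hlen : l.dropLast.length = l.length - 1 := List.length_dropLast
  have hdvd : (x - v) % n = 0 := Int.emod_eq_emod_iff_emod_sub_eq_zero.mp hmod.symm
  obtain ⟨q, hq⟩ := Int.dvd_of_emod_eq_zero hdvd
  refine ⟨n * q + (j : ℤ), ?_⟩
  rw [pfun_val hpos q j (Int.natCast_nonneg j) (by omega)]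
  rw [show ((j : ℤ)).toNat = j by omega]
  rw [List.getD_eq_getElem l 0 (by omega), ← List.getElem_dropLast (xs := l) (i := j) (by omega), hvj]
  linarith

lemma pfun_step (hpos : 0 < n) (hnodup : l.Nodup)
    (hclass : ∀ x : ℤ, ∃! v, v ∈ l.dropLast ∧ v % n = x % n)
    (hhead : l.head? = some 0) (hlast : l.getLast? = some n)
    (q r : ℤ) (h1 : 0 ≤ r) (h2 : r < n) :
    pfun l n (n * q + r + 1) = l.getD (r.toNat + 1) 0 + n * q := by
  rcases lt_or_eq_of_le (by omega : r + 1 ≤ n) with hlt | heq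
  · have e : n * q + r + 1 = n * q + (r + 1) := by ring
    rw [e, pfun_val hpos q (r+1) (by omega) hlt, show (r+1).toNat = r.toNat + 1 by omega]
  · have e : n * q + r + 1 = n * (q + 1) + 0 := by
      have : r + 1 = n := heq
      linarith [mul_add n q 1]
    rw [e, pfun_val hpos (q+1) 0 le_rfl hpos]
    rw [show (0 : ℤ).toNat = 0 from rfl, aux_head hhead]
    rw [show r.toNat + 1 = n.toNat by omega, aux_last hpos hnodup hclass hhead hlast]
    ring

lemma cay_shift {a b : ℤ} (t : ℤ) (h : (cay S).Adj a b) : (cay S).Adj (a + t) (b + t) := by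
  obtain ⟨h1, h2⟩ := h
  refine ⟨fun hc => h1 (by linarith), ?_⟩
  have e1 : a + t - (b + t) = a - b := by ring
  have e2 : b + t - (a + t) = b - a := by ring
  rw [e1, e2]
  exact h2

lemma pfun_adj (hpos : 0 < n) (hnodup : l.Nodup)
    (hclass : ∀ x : ℤ, ∃! v, v ∈ l.dropLast ∧ v % n = x % n)
    (hhead : l.head? = some 0) (hlast : l.getLast? = some n)
    (hchain : l.Chain' (cay S).Adj) (k : ℤ) :
    (cay S).Adj (pfun l n k) (pfun l n (k + 1)) := by
  have hb1 : 0 ≤ k % n := Int.emod_nonneg k hpos.ne'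
  have hb2 : k % n < n := Int.emod_lt_of_pos k hpos
  obtain ⟨q, r, rfl, hr1, hr2⟩ : ∃ q r, k = n*q + r ∧ 0 ≤ r ∧ r < n :=
    ⟨k/n, k%n, (Int.mul_ediv_add_emod k n).symm, hb1, hb2⟩
  rw [pfun_val hpos q r hr1 hr2, pfun_step hpos hnodup hclass hhead hlast q r hr1 hr2]
  have hlen := aux_len hpos hnodup hclass hhead
  have hcha := List.isChain_iff_getElem.mp hchain r.toNat (by omega)
  rw [List.getD_eq_getElem l 0 (by omega), List.getD_eq_getElem l 0 (by omega)]
  exact cay_shift (n*q) hcha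

lemma adj_iff (hpos : 0 < n) (hnodup : l.Nodup)
    (hclass : ∀ x : ℤ, ∃! v, v ∈ l.dropLast ∧ v % n = x % n)
    (hhead : l.head? = some 0) (hlast : l.getLast? = some n) (u v : ℤ) :
    (⨆ i : ℤ, shiftGraph (listGraph l) (n * i)).Adj u v ↔
      ∃ k, s(u, v) = s(pfun l n k, pfun l n (k + 1)) := by
  have hlen := aux_len hpos hnodup hclass hhead
  rw [SimpleGraph.iSup_adj]
  constructor
  · rintro ⟨q, hq⟩
    have hq' : (listGraph l).Adj (u - n*q) (v - n*q) := hq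
    simp only [listGraph, SimpleGraph.fromEdgeSet_adj, Set.mem_setOf_eq] at hq'
    obtain ⟨⟨j, hj, he⟩, hne⟩ := hq'
    refine ⟨n * q + (j : ℤ), ?_⟩
    have hjn : (j : ℤ) < n := by omega
    have e1 : pfun l n (n*q + j) = l.getD j 0 + n*q := by
      rw [pfun_val hpos q j (Int.natCast_nonneg j) hjn, show ((j:ℤ)).toNat = j by omega]
    have e2 : pfun l n (n*q + j + 1) = l.getD (j+1) 0 + n*q := by
      rw [pfun_step hpos hnodup hclass hhead hlast q j (Int.natCast_nonneg j) hjn,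
        show ((j:ℤ)).toNat = j by omega]
    rw [e1, e2]
    rcases Sym2.eq_iff.mp he with ⟨f1, f2⟩ | ⟨f1, f2⟩
    · exact Sym2.eq_iff.mpr (Or.inl ⟨by linarith, by linarith⟩)
    · exact Sym2.eq_iff.mpr (Or.inr ⟨by linarith, by linarith⟩)
  · rintro ⟨k, hk⟩
    have hb1 : 0 ≤ k % n := Int.emod_nonneg k hpos.ne'
    have hb2 : k % n < n := Int.emod_lt_of_pos k hpos
    obtain ⟨q, r, rfl, hr1, hr2⟩ : ∃ q r, k = n*q + r ∧ 0 ≤ r ∧ r < n :=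
      ⟨k/n, k%n, (Int.mul_ediv_add_emod k n).symm, hb1, hb2⟩
    refine ⟨q, ?_⟩
    show (listGraph l).Adj (u - n*q) (v - n*q)
    simp only [listGraph, SimpleGraph.fromEdgeSet_adj, Set.mem_setOf_eq]
    have e1 := pfun_val (l := l) hpos q r hr1 hr2
    have e2 := pfun_step hpos hnodup hclass hhead hlast q r hr1 hr2
    rw [e1, e2] at hk
    have hne : l.getD r.toNat 0 + n*q ≠ l.getD (r.toNat+1) 0 + n*q := by
      rw [← e1, ← e2]
      exact (pfun_inj hpos hnodup hclass).ne (lt_add_one (n*q+r)).ne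
    refine ⟨⟨r.toNat, by omega, ?_⟩, ?_⟩
    · rcases Sym2.eq_iff.mp hk with ⟨f1, f2⟩ | ⟨f1, f2⟩
      · exact Sym2.eq_iff.mpr (Or.inl ⟨by linarith, by linarith⟩)
      · exact Sym2.eq_iff.mpr (Or.inr ⟨by linarith, by linarith⟩)
    · rcases Sym2.eq_iff.mp hk with ⟨f1, f2⟩ | ⟨f1, f2⟩ <;>
        exact fun hc => hne (by linarith)

end

end Stmt16

theorem stmt16 (S : Set ℤ) (h0 : 0 ∉ S) (hinv : ∀ s, s ∈ S → -s ∈ S)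
    (n : ℤ) (hn : 0 < n) (l : List ℤ)
    (hchain : l.Chain' (cay S).Adj) (hnodup : l.Nodup)
    (hhead : l.head? = some 0) (hlast : l.getLast? = some n)
    (hclass : ∀ x : ℤ, ∃! v, v ∈ l.dropLast ∧ v % n = x % n) :
    IsHamPath (cay S) (⨆ i : ℤ, shiftGraph (listGraph l) (n * i)) := by
  have hadj := Stmt16.adj_iff (l := l) hn hnodup hclass hhead hlast
  have hinj := Stmt16.pfun_inj (l := l) hn hnodup hclass
  have hsurj := Stmt16.pfun_surj (l := l) hn hnodup hclass
  have hstep : ∀ k, (⨆ i : ℤ, shiftGraph (listGraph l) (n * i)).Adj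
      (Stmt16.pfun l n k) (Stmt16.pfun l n (k+1)) := by
    intro k
    rw [hadj]
    exact ⟨k, rfl⟩
  refine ⟨?_, ?_, ?_⟩
  · intro u v huv
    rw [hadj] at huv
    obtain ⟨k, hk⟩ := huv
    have hc := Stmt16.pfun_adj hn hnodup hclass hhead hlast hchain k
    rcases Sym2.eq_iff.mp hk with ⟨f1, f2⟩ | ⟨f1, f2⟩
    · rw [f1, f2]; exact hc
    · rw [f1, f2]; exact hc.symm
  · rw [SimpleGraph.connected_iff]
    refine ⟨?_, ⟨0⟩⟩
    intro u v
    obtain ⟨a, rfl⟩ := hsurj u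
    obtain ⟨b, rfl⟩ := hsurj v
    suffices hreach : ∀ d : ℤ, (⨆ i : ℤ, shiftGraph (listGraph l) (n * i)).Reachable
        (Stmt16.pfun l n a) (Stmt16.pfun l n (a + d)) by
      have h := hreach (b - a)
      rwa [show a + (b - a) = b by ring] at h
    intro d
    induction d using Int.induction_on with
    | zero => rw [add_zero]
    | succ i ih =>
        rw [show a + ((i : ℤ) + 1) = (a + i) + 1 by ring]
        exact ih.trans (hstep (a + i)).reachable
    | pred i ih =>
        have hadj2 := hstep (a + (-(i:ℤ) - 1))
        rw [show a + (-(i : ℤ) - 1) + 1 = a + -(i:ℤ) by ring] at hadj2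
        exact ih.trans hadj2.symm.reachable
  · intro w
    obtain ⟨k, rfl⟩ := hsurj w
    have hset : (⨆ i : ℤ, shiftGraph (listGraph l) (n * i)).neighborSet (Stmt16.pfun l n k)
        = {Stmt16.pfun l n (k-1), Stmt16.pfun l n (k+1)} := by
      ext u
      simp only [SimpleGraph.mem_neighborSet, Set.mem_insert_iff, Set.mem_singleton_iff]
      rw [hadj]
      constructor
      · rintro ⟨j, hj⟩
        rcases Sym2.eq_iff.mp hj with ⟨f1, f2⟩ | ⟨f1, f2⟩
        · right; rw [f2, hinj f1]
        · left
          have hkj := hinj f1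
          rw [f2, show j = k - 1 by omega]
      · rintro (rfl | rfl)
        · exact ⟨k - 1, Sym2.eq_iff.mpr (Or.inr ⟨by rw [show k - 1 + 1 = k by ring], rfl⟩)⟩
        · exact ⟨k, Sym2.eq_iff.mpr (Or.inl ⟨rfl, rfl⟩)⟩
    rw [hset, Set.ncard_pair]
    intro hc
    have := hinj hc
    omega
end

section
/- Let P be the path [0, -1, 1, 5, 2, 3, 6, 4, 8] in Cay(ℤ, ±{1,2,3,4}) and let H₁ = ⋃_{i∈ℤ} (P + 8i). Then {H₁, H₁+2, H₁+4, H₁+6} is a decomposition of Cay(ℤ, ±{1,2,3,4}) into 4 edge-disjoint two-way-infinite Hamilton paths. -/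
set_option maxHeartbeats 1000000

def QQ (u v : ℤ) : Prop :=
  ((u % 8 = 7 ∧ (v = u+1 ∨ v = u+2)) ∨ (u % 8 = 1 ∧ v = u+4) ∨
   (u % 8 = 2 ∧ (v = u+1 ∨ v = u+3)) ∨ (u % 8 = 3 ∧ v = u+3) ∨
   (u % 8 = 4 ∧ (v = u+2 ∨ v = u+4))) ∨
  ((v % 8 = 7 ∧ (u = v+1 ∨ u = v+2)) ∨ (v % 8 = 1 ∧ u = v+4) ∨
   (v % 8 = 2 ∧ (u = v+1 ∨ u = v+3)) ∨ (v % 8 = 3 ∧ u = v+3) ∨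
   (v % 8 = 4 ∧ (u = v+2 ∨ u = v+4)))

lemma QQ_symm {u v : ℤ} (h : QQ u v) : QQ v u := Or.symm h

lemma QQ_intro (u v r d : ℤ) (hr : u % 8 = r) (hd : v = u + d)
    (hmem : (r = 7 ∧ (d = 1 ∨ d = 2)) ∨ (r = 1 ∧ d = 4) ∨ (r = 2 ∧ (d = 1 ∨ d = 3)) ∨
      (r = 3 ∧ d = 3) ∨ (r = 4 ∧ (d = 2 ∨ d = 4))) : QQ u v := by
  unfold QQ
  rcases hmem with ⟨rfl, hd'⟩ | ⟨rfl, rfl⟩ | ⟨rfl, hd'⟩ | ⟨rfl, rfl⟩ | ⟨rfl, hd'⟩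
  · exact Or.inl (Or.inl ⟨hr, by omega⟩)
  · exact Or.inl (Or.inr (Or.inl ⟨hr, by omega⟩))
  · exact Or.inl (Or.inr (Or.inr (Or.inl ⟨hr, by omega⟩)))
  · exact Or.inl (Or.inr (Or.inr (Or.inr (Or.inl ⟨hr, by omega⟩))))
  · exact Or.inl (Or.inr (Or.inr (Or.inr (Or.inr ⟨hr, by omega⟩))))

lemma listAdj (a b : ℤ) : (listGraph [0, -1, 1, 5, 2, 3, 6, 4, 8]).Adj a b ↔
    (((a = 0 ∧ b = -1) ∨ (a = -1 ∧ b = 1) ∨ (a = 1 ∧ b = 5) ∨ (a = 5 ∧ b = 2) ∨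
      (a = 2 ∧ b = 3) ∨ (a = 3 ∧ b = 6) ∨ (a = 6 ∧ b = 4) ∨ (a = 4 ∧ b = 8)) ∨
     ((b = 0 ∧ a = -1) ∨ (b = -1 ∧ a = 1) ∨ (b = 1 ∧ a = 5) ∨ (b = 5 ∧ a = 2) ∨
      (b = 2 ∧ a = 3) ∨ (b = 3 ∧ a = 6) ∨ (b = 6 ∧ a = 4) ∨ (b = 4 ∧ a = 8))) := by
  rw [listGraph, SimpleGraph.fromEdgeSet_adj]
  constructor
  · rintro ⟨⟨i, hi, he⟩, hne⟩
    simp only [List.length_cons, List.length_nil] at hi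
    have hi8 : i < 8 := by omega
    interval_cases i <;>
      simp only [List.getD_cons_zero, List.getD_cons_succ] at he <;>
      rw [Sym2.eq_iff] at he <;>
      rcases he with ⟨rfl, rfl⟩ | ⟨rfl, rfl⟩ <;> norm_num
  · intro h
    have hne : a ≠ b := by omega
    refine ⟨?_, hne⟩
    rcases h with (⟨h1,h2⟩|⟨h1,h2⟩|⟨h1,h2⟩|⟨h1,h2⟩|⟨h1,h2⟩|⟨h1,h2⟩|⟨h1,h2⟩|⟨h1,h2⟩)|
      (⟨h1,h2⟩|⟨h1,h2⟩|⟨h1,h2⟩|⟨h1,h2⟩|⟨h1,h2⟩|⟨h1,h2⟩|⟨h1,h2⟩|⟨h1,h2⟩) <;> subst h1 <;> subst h2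
    · exact ⟨0, by norm_num, by simp [List.getD_cons_zero, List.getD_cons_succ, Sym2.eq_iff]⟩
    · exact ⟨1, by norm_num, by simp [List.getD_cons_zero, List.getD_cons_succ, Sym2.eq_iff]⟩
    · exact ⟨2, by norm_num, by simp [List.getD_cons_zero, List.getD_cons_succ, Sym2.eq_iff]⟩
    · exact ⟨3, by norm_num, by simp [List.getD_cons_zero, List.getD_cons_succ, Sym2.eq_iff]⟩
    · exact ⟨4, by norm_num, by simp [List.getD_cons_zero, List.getD_cons_succ, Sym2.eq_iff]⟩
    · exact ⟨5, by norm_num, by simp [List.getD_cons_zero, List.getD_cons_succ, Sym2.eq_iff]⟩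
    · exact ⟨6, by norm_num, by simp [List.getD_cons_zero, List.getD_cons_succ, Sym2.eq_iff]⟩
    · exact ⟨7, by norm_num, by simp [List.getD_cons_zero, List.getD_cons_succ, Sym2.eq_iff]⟩
    · exact ⟨0, by norm_num, by simp [List.getD_cons_zero, List.getD_cons_succ, Sym2.eq_iff]⟩
    · exact ⟨1, by norm_num, by simp [List.getD_cons_zero, List.getD_cons_succ, Sym2.eq_iff]⟩
    · exact ⟨2, by norm_num, by simp [List.getD_cons_zero, List.getD_cons_succ, Sym2.eq_iff]⟩
    · exact ⟨3, by norm_num, by simp [List.getD_cons_zero, List.getD_cons_succ, Sym2.eq_iff]⟩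
    · exact ⟨4, by norm_num, by simp [List.getD_cons_zero, List.getD_cons_succ, Sym2.eq_iff]⟩
    · exact ⟨5, by norm_num, by simp [List.getD_cons_zero, List.getD_cons_succ, Sym2.eq_iff]⟩
    · exact ⟨6, by norm_num, by simp [List.getD_cons_zero, List.getD_cons_succ, Sym2.eq_iff]⟩
    · exact ⟨7, by norm_num, by simp [List.getD_cons_zero, List.getD_cons_succ, Sym2.eq_iff]⟩

lemma K_adj (u v : ℤ) :
    (⨆ i : ℤ, shiftGraph (listGraph [0, -1, 1, 5, 2, 3, 6, 4, 8]) (8 * i)).Adj u v ↔ QQ u v := by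
  rw [SimpleGraph.iSup_adj]
  constructor
  · rintro ⟨q, hq⟩
    have h := (listAdj (u - 8*q) (v - 8*q)).mp hq
    rcases h with (⟨h1,h2⟩|⟨h1,h2⟩|⟨h1,h2⟩|⟨h1,h2⟩|⟨h1,h2⟩|⟨h1,h2⟩|⟨h1,h2⟩|⟨h1,h2⟩)|
      (⟨h1,h2⟩|⟨h1,h2⟩|⟨h1,h2⟩|⟨h1,h2⟩|⟨h1,h2⟩|⟨h1,h2⟩|⟨h1,h2⟩|⟨h1,h2⟩)
    · exact QQ_symm (QQ_intro v u 7 1 (by omega) (by omega) (by norm_num))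
    · exact QQ_intro u v 7 2 (by omega) (by omega) (by norm_num)
    · exact QQ_intro u v 1 4 (by omega) (by omega) (by norm_num)
    · exact QQ_symm (QQ_intro v u 2 3 (by omega) (by omega) (by norm_num))
    · exact QQ_intro u v 2 1 (by omega) (by omega) (by norm_num)
    · exact QQ_intro u v 3 3 (by omega) (by omega) (by norm_num)
    · exact QQ_symm (QQ_intro v u 4 2 (by omega) (by omega) (by norm_num))
    · exact QQ_intro u v 4 4 (by omega) (by omega) (by norm_num)
    · exact QQ_intro u v 7 1 (by omega) (by omega) (by norm_num)
    · exact QQ_symm (QQ_intro v u 7 2 (by omega) (by omega) (by norm_num))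
    · exact QQ_symm (QQ_intro v u 1 4 (by omega) (by omega) (by norm_num))
    · exact QQ_intro u v 2 3 (by omega) (by omega) (by norm_num)
    · exact QQ_symm (QQ_intro v u 2 1 (by omega) (by omega) (by norm_num))
    · exact QQ_symm (QQ_intro v u 3 3 (by omega) (by omega) (by norm_num))
    · exact QQ_intro u v 4 2 (by omega) (by omega) (by norm_num)
    · exact QQ_symm (QQ_intro v u 4 4 (by omega) (by omega) (by norm_num))
  · intro hQ
    unfold QQ at hQ
    rcases hQ with (⟨h,h'|h'⟩|⟨h,h'⟩|⟨h,h'|h'⟩|⟨h,h'⟩|⟨h,h'|h'⟩)|(⟨h,h'|h'⟩|⟨h,h'⟩|⟨h,h'|h'⟩|⟨h,h'⟩|⟨h,h'|h'⟩)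
    · exact ⟨(u+1)/8, (listAdj (u - 8*((u+1)/8)) (v - 8*((u+1)/8))).mpr (Or.inr (Or.inl ⟨by omega, by omega⟩))⟩
    · exact ⟨(u+1)/8, (listAdj (u - 8*((u+1)/8)) (v - 8*((u+1)/8))).mpr (Or.inl (Or.inr (Or.inl ⟨by omega, by omega⟩)))⟩
    · exact ⟨u/8, (listAdj (u - 8*(u/8)) (v - 8*(u/8))).mpr (Or.inl (Or.inr (Or.inr (Or.inl ⟨by omega, by omega⟩))))⟩
    · exact ⟨u/8, (listAdj (u - 8*(u/8)) (v - 8*(u/8))).mpr (Or.inl (Or.inr (Or.inr (Or.inr (Or.inr (Or.inl ⟨by omega, by omega⟩))))))⟩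
    · exact ⟨u/8, (listAdj (u - 8*(u/8)) (v - 8*(u/8))).mpr (Or.inr (Or.inr (Or.inr (Or.inr (Or.inl ⟨by omega, by omega⟩)))))⟩
    · exact ⟨u/8, (listAdj (u - 8*(u/8)) (v - 8*(u/8))).mpr (Or.inl (Or.inr (Or.inr (Or.inr (Or.inr (Or.inr (Or.inl ⟨by omega, by omega⟩)))))))⟩
    · exact ⟨u/8, (listAdj (u - 8*(u/8)) (v - 8*(u/8))).mpr (Or.inr (Or.inr (Or.inr (Or.inr (Or.inr (Or.inr (Or.inr (Or.inl ⟨by omega, by omega⟩))))))))⟩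
    · exact ⟨u/8, (listAdj (u - 8*(u/8)) (v - 8*(u/8))).mpr (Or.inl (Or.inr (Or.inr (Or.inr (Or.inr (Or.inr (Or.inr (Or.inr ⟨by omega, by omega⟩))))))))⟩
    · exact ⟨(v+1)/8, (listAdj (u - 8*((v+1)/8)) (v - 8*((v+1)/8))).mpr (Or.inl (Or.inl ⟨by omega, by omega⟩))⟩
    · exact ⟨(v+1)/8, (listAdj (u - 8*((v+1)/8)) (v - 8*((v+1)/8))).mpr (Or.inr (Or.inr (Or.inl ⟨by omega, by omega⟩)))⟩
    · exact ⟨v/8, (listAdj (u - 8*(v/8)) (v - 8*(v/8))).mpr (Or.inr (Or.inr (Or.inr (Or.inl ⟨by omega, by omega⟩))))⟩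
    · exact ⟨v/8, (listAdj (u - 8*(v/8)) (v - 8*(v/8))).mpr (Or.inr (Or.inr (Or.inr (Or.inr (Or.inr (Or.inl ⟨by omega, by omega⟩))))))⟩
    · exact ⟨v/8, (listAdj (u - 8*(v/8)) (v - 8*(v/8))).mpr (Or.inl (Or.inr (Or.inr (Or.inr (Or.inl ⟨by omega, by omega⟩)))))⟩
    · exact ⟨v/8, (listAdj (u - 8*(v/8)) (v - 8*(v/8))).mpr (Or.inr (Or.inr (Or.inr (Or.inr (Or.inr (Or.inr (Or.inl ⟨by omega, by omega⟩)))))))⟩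
    · exact ⟨v/8, (listAdj (u - 8*(v/8)) (v - 8*(v/8))).mpr (Or.inl (Or.inr (Or.inr (Or.inr (Or.inr (Or.inr (Or.inr (Or.inl ⟨by omega, by omega⟩))))))))⟩
    · exact ⟨v/8, (listAdj (u - 8*(v/8)) (v - 8*(v/8))).mpr (Or.inr (Or.inr (Or.inr (Or.inr (Or.inr (Or.inr (Or.inr (Or.inr ⟨by omega, by omega⟩))))))))⟩


def pf (n : ℤ) : ℤ :=
  8 * (n / 8) + (if n % 8 = 0 then 0 else if n % 8 = 1 then -1 else if n % 8 = 2 then 1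
    else if n % 8 = 3 then 5 else if n % 8 = 4 then 2 else if n % 8 = 5 then 3
    else if n % 8 = 6 then 6 else 4)

lemma pf_adj (n : ℤ) : QQ (pf n) (pf (n+1)) := by
  have h8 : n % 8 = 0 ∨ n % 8 = 1 ∨ n % 8 = 2 ∨ n % 8 = 3 ∨ n % 8 = 4 ∨ n % 8 = 5 ∨
      n % 8 = 6 ∨ n % 8 = 7 := by omega
  rcases h8 with h|h|h|h|h|h|h|h
  · have e1 : pf n = 8*(n/8) + (0) := by
      unfold pf; rw [h]; norm_num
    have h' : (n+1) % 8 = 1 := by omega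
    have e2 : pf (n+1) = 8*((n+1)/8) + (-1) := by
      unfold pf; rw [h']; norm_num
    rw [e1, e2]
    exact (QQ_symm (QQ_intro _ _ 7 1 (by omega) (by omega) (by norm_num)))
  · have e1 : pf n = 8*(n/8) + (-1) := by
      unfold pf; rw [h]; norm_num
    have h' : (n+1) % 8 = 2 := by omega
    have e2 : pf (n+1) = 8*((n+1)/8) + (1) := by
      unfold pf; rw [h']; norm_num
    rw [e1, e2]
    exact (QQ_intro _ _ 7 2 (by omega) (by omega) (by norm_num))
  · have e1 : pf n = 8*(n/8) + (1) := by
      unfold pf; rw [h]; norm_num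
    have h' : (n+1) % 8 = 3 := by omega
    have e2 : pf (n+1) = 8*((n+1)/8) + (5) := by
      unfold pf; rw [h']; norm_num
    rw [e1, e2]
    exact (QQ_intro _ _ 1 4 (by omega) (by omega) (by norm_num))
  · have e1 : pf n = 8*(n/8) + (5) := by
      unfold pf; rw [h]; norm_num
    have h' : (n+1) % 8 = 4 := by omega
    have e2 : pf (n+1) = 8*((n+1)/8) + (2) := by
      unfold pf; rw [h']; norm_num
    rw [e1, e2]
    exact (QQ_symm (QQ_intro _ _ 2 3 (by omega) (by omega) (by norm_num)))
  · have e1 : pf n = 8*(n/8) + (2) := by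
      unfold pf; rw [h]; norm_num
    have h' : (n+1) % 8 = 5 := by omega
    have e2 : pf (n+1) = 8*((n+1)/8) + (3) := by
      unfold pf; rw [h']; norm_num
    rw [e1, e2]
    exact (QQ_intro _ _ 2 1 (by omega) (by omega) (by norm_num))
  · have e1 : pf n = 8*(n/8) + (3) := by
      unfold pf; rw [h]; norm_num
    have h' : (n+1) % 8 = 6 := by omega
    have e2 : pf (n+1) = 8*((n+1)/8) + (6) := by
      unfold pf; rw [h']; norm_num
    rw [e1, e2]
    exact (QQ_intro _ _ 3 3 (by omega) (by omega) (by norm_num))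
  · have e1 : pf n = 8*(n/8) + (6) := by
      unfold pf; rw [h]; norm_num
    have h' : (n+1) % 8 = 7 := by omega
    have e2 : pf (n+1) = 8*((n+1)/8) + (4) := by
      unfold pf; rw [h']; norm_num
    rw [e1, e2]
    exact (QQ_symm (QQ_intro _ _ 4 2 (by omega) (by omega) (by norm_num)))
  · have e1 : pf n = 8*(n/8) + (4) := by
      unfold pf; rw [h]; norm_num
    have h' : (n+1) % 8 = 0 := by omega
    have e2 : pf (n+1) = 8*((n+1)/8) + (0) := by
      unfold pf; rw [h']; norm_num
    rw [e1, e2]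
    exact (QQ_intro _ _ 4 4 (by omega) (by omega) (by norm_num))

lemma pf_surj (v : ℤ) : ∃ n, pf n = v := by
  have h8 : v % 8 = 0 ∨ v % 8 = 1 ∨ v % 8 = 2 ∨ v % 8 = 3 ∨ v % 8 = 4 ∨ v % 8 = 5 ∨
      v % 8 = 6 ∨ v % 8 = 7 := by omega
  rcases h8 with h|h|h|h|h|h|h|h
  · refine ⟨8*(v/8) + 0, ?_⟩
    have hm : (8*(v/8) + 0) % 8 = 0 := by omega
    have hd : (8*(v/8) + 0) / 8 = v/8 := by omega
    have e : pf (8*(v/8) + 0) = 8*(v/8) + (0) := by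
      unfold pf; rw [hm, hd]; norm_num
    rw [e]; omega
  · refine ⟨8*(v/8) + 2, ?_⟩
    have hm : (8*(v/8) + 2) % 8 = 2 := by omega
    have hd : (8*(v/8) + 2) / 8 = v/8 := by omega
    have e : pf (8*(v/8) + 2) = 8*(v/8) + (1) := by
      unfold pf; rw [hm, hd]; norm_num
    rw [e]; omega
  · refine ⟨8*(v/8) + 4, ?_⟩
    have hm : (8*(v/8) + 4) % 8 = 4 := by omega
    have hd : (8*(v/8) + 4) / 8 = v/8 := by omega
    have e : pf (8*(v/8) + 4) = 8*(v/8) + (2) := by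
      unfold pf; rw [hm, hd]; norm_num
    rw [e]; omega
  · refine ⟨8*(v/8) + 5, ?_⟩
    have hm : (8*(v/8) + 5) % 8 = 5 := by omega
    have hd : (8*(v/8) + 5) / 8 = v/8 := by omega
    have e : pf (8*(v/8) + 5) = 8*(v/8) + (3) := by
      unfold pf; rw [hm, hd]; norm_num
    rw [e]; omega
  · refine ⟨8*(v/8) + 7, ?_⟩
    have hm : (8*(v/8) + 7) % 8 = 7 := by omega
    have hd : (8*(v/8) + 7) / 8 = v/8 := by omega
    have e : pf (8*(v/8) + 7) = 8*(v/8) + (4) := by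
      unfold pf; rw [hm, hd]; norm_num
    rw [e]; omega
  · refine ⟨8*(v/8) + 3, ?_⟩
    have hm : (8*(v/8) + 3) % 8 = 3 := by omega
    have hd : (8*(v/8) + 3) / 8 = v/8 := by omega
    have e : pf (8*(v/8) + 3) = 8*(v/8) + (5) := by
      unfold pf; rw [hm, hd]; norm_num
    rw [e]; omega
  · refine ⟨8*(v/8) + 6, ?_⟩
    have hm : (8*(v/8) + 6) % 8 = 6 := by omega
    have hd : (8*(v/8) + 6) / 8 = v/8 := by omega
    have e : pf (8*(v/8) + 6) = 8*(v/8) + (6) := by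
      unfold pf; rw [hm, hd]; norm_num
    rw [e]; omega
  · refine ⟨8*(v/8) + 9, ?_⟩
    have hm : (8*(v/8) + 9) % 8 = 1 := by omega
    have hd : (8*(v/8) + 9) / 8 = v/8 + 1 := by omega
    have e : pf (8*(v/8) + 9) = 8*(v/8 + 1) + (-1) := by
      unfold pf; rw [hm, hd]; norm_num
    rw [e]; omega

lemma le_aux (G : SimpleGraph ℤ) (t : ℤ) (hG : ∀ u v, G.Adj u v ↔ QQ (u-t) (v-t)) :
    G ≤ cay ({1, 2, 3, 4} : Set ℤ) := by
  intro u v huv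
  have h := (hG u v).mp huv
  unfold QQ at h
  refine ⟨by omega, ?_⟩
  simp only [Set.mem_insert_iff, Set.mem_singleton_iff]
  omega

lemma conn_aux (G : SimpleGraph ℤ) (t : ℤ) (hG : ∀ u v, G.Adj u v ↔ QQ (u-t) (v-t)) :
    G.Connected := by
  have hadj : ∀ n : ℤ, G.Adj (pf n + t) (pf (n+1) + t) := by
    intro n
    rw [hG]
    simpa using pf_adj n
  have hreach : ∀ m : ℤ, G.Reachable (pf 0 + t) (pf m + t) := by
    intro m
    induction m using Int.induction_on with
    | zero => exact SimpleGraph.Reachable.refl _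
    | succ i ih => exact ih.trans (hadj i).reachable
    | pred i ih =>
        have h2 := (hadj (-(i:ℤ)-1)).reachable
        rw [show (-(i:ℤ)-1)+1 = -(i:ℤ) by ring] at h2
        exact ih.trans h2.symm
  rw [SimpleGraph.connected_iff]
  refine ⟨?_, ⟨0⟩⟩
  intro u v
  obtain ⟨n, hn⟩ := pf_surj (u - t)
  obtain ⟨m, hm⟩ := pf_surj (v - t)
  have hu : u = pf n + t := by omega
  have hv : v = pf m + t := by omega
  rw [hu, hv]
  exact (hreach n).symm.trans (hreach m)

lemma deg_aux (G : SimpleGraph ℤ) (t : ℤ) (hG : ∀ u v, G.Adj u v ↔ QQ (u-t) (v-t)) :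
    ∀ v : ℤ, (G.neighborSet v).ncard = 2 := by
  intro v
  have h8 : (v-t) % 8 = 0 ∨ (v-t) % 8 = 1 ∨ (v-t) % 8 = 2 ∨ (v-t) % 8 = 3 ∨ (v-t) % 8 = 4 ∨
      (v-t) % 8 = 5 ∨ (v-t) % 8 = 6 ∨ (v-t) % 8 = 7 := by omega
  have key : ∃ a b : ℤ, a ≠ b ∧ ∀ w, G.Adj v w ↔ (w = a ∨ w = b) := by
    rcases h8 with h|h|h|h|h|h|h|h
    · refine ⟨v - 1, v - 4, by omega, fun w => ?_⟩
      rw [hG]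
      constructor
      · intro hq; unfold QQ at hq; omega
      · rintro (rfl|rfl)
        · exact (QQ_symm (QQ_intro _ _ 7 1 (by omega) (by omega) (by norm_num)))
        · exact (QQ_symm (QQ_intro _ _ 4 4 (by omega) (by omega) (by norm_num)))
    · refine ⟨v + 4, v - 2, by omega, fun w => ?_⟩
      rw [hG]
      constructor
      · intro hq; unfold QQ at hq; omega
      · rintro (rfl|rfl)
        · exact (QQ_intro _ _ 1 4 (by omega) (by omega) (by norm_num))
        · exact (QQ_symm (QQ_intro _ _ 7 2 (by omega) (by omega) (by norm_num)))
    · refine ⟨v + 1, v + 3, by omega, fun w => ?_⟩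
      rw [hG]
      constructor
      · intro hq; unfold QQ at hq; omega
      · rintro (rfl|rfl)
        · exact (QQ_intro _ _ 2 1 (by omega) (by omega) (by norm_num))
        · exact (QQ_intro _ _ 2 3 (by omega) (by omega) (by norm_num))
    · refine ⟨v + 3, v - 1, by omega, fun w => ?_⟩
      rw [hG]
      constructor
      · intro hq; unfold QQ at hq; omega
      · rintro (rfl|rfl)
        · exact (QQ_intro _ _ 3 3 (by omega) (by omega) (by norm_num))
        · exact (QQ_symm (QQ_intro _ _ 2 1 (by omega) (by omega) (by norm_num)))
    · refine ⟨v + 2, v + 4, by omega, fun w => ?_⟩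
      rw [hG]
      constructor
      · intro hq; unfold QQ at hq; omega
      · rintro (rfl|rfl)
        · exact (QQ_intro _ _ 4 2 (by omega) (by omega) (by norm_num))
        · exact (QQ_intro _ _ 4 4 (by omega) (by omega) (by norm_num))
    · refine ⟨v - 3, v - 4, by omega, fun w => ?_⟩
      rw [hG]
      constructor
      · intro hq; unfold QQ at hq; omega
      · rintro (rfl|rfl)
        · exact (QQ_symm (QQ_intro _ _ 2 3 (by omega) (by omega) (by norm_num)))
        · exact (QQ_symm (QQ_intro _ _ 1 4 (by omega) (by omega) (by norm_num)))
    · refine ⟨v - 2, v - 3, by omega, fun w => ?_⟩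
      rw [hG]
      constructor
      · intro hq; unfold QQ at hq; omega
      · rintro (rfl|rfl)
        · exact (QQ_symm (QQ_intro _ _ 4 2 (by omega) (by omega) (by norm_num)))
        · exact (QQ_symm (QQ_intro _ _ 3 3 (by omega) (by omega) (by norm_num)))
    · refine ⟨v + 1, v + 2, by omega, fun w => ?_⟩
      rw [hG]
      constructor
      · intro hq; unfold QQ at hq; omega
      · rintro (rfl|rfl)
        · exact (QQ_intro _ _ 7 1 (by omega) (by omega) (by norm_num))
        · exact (QQ_intro _ _ 7 2 (by omega) (by omega) (by norm_num))
  obtain ⟨a, b, hab, hw⟩ := key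
  have hset : G.neighborSet v = {a, b} := by
    ext w
    simp only [SimpleGraph.mem_neighborSet, hw, Set.mem_insert_iff, Set.mem_singleton_iff]
  rw [hset]
  exact Set.ncard_pair hab

lemma cover (u v : ℤ) (hd : v = u+1 ∨ v = u+2 ∨ v = u+3 ∨ v = u+4) :
    QQ u v ∨ QQ (u-2) (v-2) ∨ QQ (u-4) (v-4) ∨ QQ (u-6) (v-6) := by
  have h8 : u % 8 = 0 ∨ u % 8 = 1 ∨ u % 8 = 2 ∨ u % 8 = 3 ∨ u % 8 = 4 ∨ u % 8 = 5 ∨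
      u % 8 = 6 ∨ u % 8 = 7 := by omega
  rcases hd with rfl|rfl|rfl|rfl <;> rcases h8 with h|h|h|h|h|h|h|h
  · exact Or.inr (Or.inr (Or.inr (QQ_intro _ _ 2 1 (by omega) (by omega) (by norm_num))))
  · exact Or.inr (Or.inl (QQ_intro _ _ 7 1 (by omega) (by omega) (by norm_num)))
  · exact Or.inl (QQ_intro _ _ 2 1 (by omega) (by omega) (by norm_num))
  · exact Or.inr (Or.inr (Or.inl (QQ_intro _ _ 7 1 (by omega) (by omega) (by norm_num))))
  · exact Or.inr (Or.inl (QQ_intro _ _ 2 1 (by omega) (by omega) (by norm_num)))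
  · exact Or.inr (Or.inr (Or.inr (QQ_intro _ _ 7 1 (by omega) (by omega) (by norm_num))))
  · exact Or.inr (Or.inr (Or.inl (QQ_intro _ _ 2 1 (by omega) (by omega) (by norm_num))))
  · exact Or.inl (QQ_intro _ _ 7 1 (by omega) (by omega) (by norm_num))
  · exact Or.inr (Or.inr (Or.inl (QQ_intro _ _ 4 2 (by omega) (by omega) (by norm_num))))
  · exact Or.inr (Or.inl (QQ_intro _ _ 7 2 (by omega) (by omega) (by norm_num)))
  · exact Or.inr (Or.inr (Or.inr (QQ_intro _ _ 4 2 (by omega) (by omega) (by norm_num))))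
  · exact Or.inr (Or.inr (Or.inl (QQ_intro _ _ 7 2 (by omega) (by omega) (by norm_num))))
  · exact Or.inl (QQ_intro _ _ 4 2 (by omega) (by omega) (by norm_num))
  · exact Or.inr (Or.inr (Or.inr (QQ_intro _ _ 7 2 (by omega) (by omega) (by norm_num))))
  · exact Or.inr (Or.inl (QQ_intro _ _ 4 2 (by omega) (by omega) (by norm_num)))
  · exact Or.inl (QQ_intro _ _ 7 2 (by omega) (by omega) (by norm_num))
  · exact Or.inr (Or.inr (Or.inr (QQ_intro _ _ 2 3 (by omega) (by omega) (by norm_num))))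
  · exact Or.inr (Or.inr (Or.inr (QQ_intro _ _ 3 3 (by omega) (by omega) (by norm_num))))
  · exact Or.inl (QQ_intro _ _ 2 3 (by omega) (by omega) (by norm_num))
  · exact Or.inl (QQ_intro _ _ 3 3 (by omega) (by omega) (by norm_num))
  · exact Or.inr (Or.inl (QQ_intro _ _ 2 3 (by omega) (by omega) (by norm_num)))
  · exact Or.inr (Or.inl (QQ_intro _ _ 3 3 (by omega) (by omega) (by norm_num)))
  · exact Or.inr (Or.inr (Or.inl (QQ_intro _ _ 2 3 (by omega) (by omega) (by norm_num))))
  · exact Or.inr (Or.inr (Or.inl (QQ_intro _ _ 3 3 (by omega) (by omega) (by norm_num))))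
  · exact Or.inr (Or.inr (Or.inl (QQ_intro _ _ 4 4 (by omega) (by omega) (by norm_num))))
  · exact Or.inl (QQ_intro _ _ 1 4 (by omega) (by omega) (by norm_num))
  · exact Or.inr (Or.inr (Or.inr (QQ_intro _ _ 4 4 (by omega) (by omega) (by norm_num))))
  · exact Or.inr (Or.inl (QQ_intro _ _ 1 4 (by omega) (by omega) (by norm_num)))
  · exact Or.inl (QQ_intro _ _ 4 4 (by omega) (by omega) (by norm_num))
  · exact Or.inr (Or.inr (Or.inl (QQ_intro _ _ 1 4 (by omega) (by omega) (by norm_num))))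
  · exact Or.inr (Or.inl (QQ_intro _ _ 4 4 (by omega) (by omega) (by norm_num)))
  · exact Or.inr (Or.inr (Or.inr (QQ_intro _ _ 1 4 (by omega) (by omega) (by norm_num))))

theorem stmt17 :
    ∀ H1 : SimpleGraph ℤ,
      H1 = (⨆ i : ℤ, shiftGraph (listGraph [0, -1, 1, 5, 2, 3, 6, 4, 8]) (8 * i)) →
      (∀ j : Fin 4, IsHamPath (cay ({1, 2, 3, 4} : Set ℤ)) (shiftGraph H1 (2 * ((j : ℕ) : ℤ)))) ∧
      (∀ j j' : Fin 4, j ≠ j' →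
        Disjoint (shiftGraph H1 (2 * ((j : ℕ) : ℤ))).edgeSet
          (shiftGraph H1 (2 * ((j' : ℕ) : ℤ))).edgeSet) ∧
      (∀ e ∈ (cay ({1, 2, 3, 4} : Set ℤ)).edgeSet,
        ∃ j : Fin 4, e ∈ (shiftGraph H1 (2 * ((j : ℕ) : ℤ))).edgeSet) := by
  intro H1 hH1
  subst hH1
  have hK : ∀ (t u v : ℤ),
      (shiftGraph (⨆ i : ℤ, shiftGraph (listGraph [0, -1, 1, 5, 2, 3, 6, 4, 8]) (8 * i)) t).Adj u v
        ↔ QQ (u - t) (v - t) :=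
    fun t u v => K_adj (u - t) (v - t)
  refine ⟨?_, ?_, ?_⟩
  · intro j
    exact ⟨le_aux _ _ (hK (2 * ((j : ℕ) : ℤ))), conn_aux _ _ (hK (2 * ((j : ℕ) : ℤ))),
      deg_aux _ _ (hK (2 * ((j : ℕ) : ℤ)))⟩
  · intro j j' hne
    rw [Set.disjoint_left]
    intro e
    induction e using Sym2.ind with
    | _ u v =>
      intro he he'
      rw [SimpleGraph.mem_edgeSet] at he he'
      rw [hK] at he he'
      fin_cases j <;> fin_cases j' <;> (try exact absurd rfl hne) <;> norm_num at he he' hne ⊢ <;>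
        (try exact hne rfl) <;> unfold QQ at he he' <;> omega
  · intro e
    induction e using Sym2.ind with
    | _ u v =>
      intro he
      rw [SimpleGraph.mem_edgeSet] at he
      obtain ⟨hne', hmem⟩ := he
      simp only [Set.mem_insert_iff, Set.mem_singleton_iff] at hmem
      have hd : (v = u+1 ∨ v = u+2 ∨ v = u+3 ∨ v = u+4) ∨
          (u = v+1 ∨ u = v+2 ∨ u = v+3 ∨ u = v+4) := by omega
      have h4 : QQ u v ∨ QQ (u-2) (v-2) ∨ QQ (u-4) (v-4) ∨ QQ (u-6) (v-6) := by
        rcases hd with hd | hd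
        · exact cover u v hd
        · rcases cover v u hd with h|h|h|h
          · exact Or.inl (QQ_symm h)
          · exact Or.inr (Or.inl (QQ_symm h))
          · exact Or.inr (Or.inr (Or.inl (QQ_symm h)))
          · exact Or.inr (Or.inr (Or.inr (QQ_symm h)))
      rcases h4 with h|h|h|h
      · refine ⟨0, ?_⟩
        rw [SimpleGraph.mem_edgeSet, hK]
        norm_num
        convert h using 2 <;> omega
      · refine ⟨1, ?_⟩
        rw [SimpleGraph.mem_edgeSet, hK]
        norm_num
        convert h using 2 <;> omega
      · refine ⟨2, ?_⟩
        rw [SimpleGraph.mem_edgeSet, hK]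
        norm_num
        convert h using 2 <;> omega
      · refine ⟨3, ?_⟩
        rw [SimpleGraph.mem_edgeSet, hK]
        norm_num
        convert h using 2 <;> omega
end

section
/- Cay(ℤ, {±1, ±3, ±5}) admits a decomposition into 3 edge-disjoint two-way-infinite Hamilton paths. -/
/-- Path graph traced by a bijection of ℤ. -/
def pg (f : ℤ ≃ ℤ) : SimpleGraph ℤ where
  Adj u v := ∃ n : ℤ, (u = f n ∧ v = f (n+1)) ∨ (v = f n ∧ u = f (n+1))
  symm := by
    constructor
    rintro u v ⟨n, h | h⟩
    · exact ⟨n, Or.inr h⟩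
    · exact ⟨n, Or.inl h⟩
  loopless := by
    constructor
    rintro v ⟨n, ⟨h1, h2⟩ | ⟨h1, h2⟩⟩ <;>
    · have h : f n = f (n+1) := by rw [← h1, ← h2]
      have := f.injective h
      omega

lemma pg_neighborSet (f : ℤ ≃ ℤ) (v : ℤ) :
    (pg f).neighborSet v = {f (f.symm v - 1), f (f.symm v + 1)} := by
  ext u
  simp only [SimpleGraph.mem_neighborSet, Set.mem_insert_iff, Set.mem_singleton_iff]
  constructor
  · rintro ⟨n, ⟨h1, h2⟩ | ⟨h1, h2⟩⟩
    · right
      rw [h1, Equiv.symm_apply_apply]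
      exact h2
    · left
      rw [h2, Equiv.symm_apply_apply, show n + 1 - 1 = n from by ring]
      exact h1
  · rintro (h | h)
    · exact ⟨f.symm v - 1, Or.inr ⟨h,
        by rw [show f.symm v - 1 + 1 = f.symm v from by ring, Equiv.apply_symm_apply]⟩⟩
    · exact ⟨f.symm v, Or.inl ⟨(f.apply_symm_apply v).symm, h⟩⟩

lemma pg_deg (f : ℤ ≃ ℤ) (v : ℤ) : ((pg f).neighborSet v).ncard = 2 := by
  rw [pg_neighborSet]
  refine Set.ncard_pair ?_
  intro h
  have := f.injective h
  omega

lemma pg_reach (f : ℤ ≃ ℤ) (n : ℤ) : (pg f).Reachable (f 0) (f n) := by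
  induction n using Int.induction_on with
  | zero => exact SimpleGraph.Reachable.refl _
  | succ k ih => exact ih.trans (SimpleGraph.Adj.reachable ⟨(k : ℤ), Or.inl ⟨rfl, rfl⟩⟩)
  | pred k ih =>
      refine ih.trans (SimpleGraph.Adj.reachable ?_)
      exact ⟨-(k : ℤ) - 1, Or.inr ⟨rfl, congrArg f (by ring)⟩⟩

lemma pg_conn (f : ℤ ≃ ℤ) : (pg f).Connected := by
  refine ⟨fun u v => ?_⟩
  have h := (pg_reach f (f.symm u)).symm.trans (pg_reach f (f.symm v))
  simpa using h

def e0 : ℤ ≃ ℤ := Equiv.refl ℤ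

def e1 : ℤ ≃ ℤ where
  toFun n := n + 4 * (n % 2)
  invFun m := m - 4 * (m % 2)
  left_inv n := by dsimp only; omega
  right_inv m := by dsimp only; omega

def e2 : ℤ ≃ ℤ where
  toFun n := n + 1 + 4 * (n % 2)
  invFun m := m - 5 + 4 * (m % 2)
  left_inv n := by dsimp only; omega
  right_inv m := by dsimp only; omega

@[simp] lemma e0_apply (n : ℤ) : e0 n = n := rfl
@[simp] lemma e1_apply (n : ℤ) : e1 n = n + 4 * (n % 2) := rfl
@[simp] lemma e2_apply (n : ℤ) : e2 n = n + 1 + 4 * (n % 2) := rfl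

lemma adj0 (u v : ℤ) : (pg e0).Adj u v ↔ (v = u + 1 ∨ u = v + 1) := by
  constructor
  · rintro ⟨n, ⟨h1, h2⟩ | ⟨h1, h2⟩⟩ <;> simp only [e0_apply] at h1 h2 <;> omega
  · rintro (h | h)
    · exact ⟨u, Or.inl ⟨rfl, by simp [h]⟩⟩
    · exact ⟨v, Or.inr ⟨rfl, by simp [h]⟩⟩

lemma adj1 (u v : ℤ) : (pg e1).Adj u v ↔
    (u % 2 = 0 ∧ (v = u + 3 ∨ v = u + 5)) ∨ (v % 2 = 0 ∧ (u = v + 3 ∨ u = v + 5)) := by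
  constructor
  · rintro ⟨n, ⟨h1, h2⟩ | ⟨h1, h2⟩⟩ <;> simp only [e1_apply] at h1 h2 <;> omega
  · rintro (⟨he, h | h⟩ | ⟨he, h | h⟩)
    · exact ⟨u - 1, Or.inr ⟨by simp only [e1_apply]; omega, by simp only [e1_apply]; omega⟩⟩
    · exact ⟨u, Or.inl ⟨by simp only [e1_apply]; omega, by simp only [e1_apply]; omega⟩⟩
    · exact ⟨v - 1, Or.inl ⟨by simp only [e1_apply]; omega, by simp only [e1_apply]; omega⟩⟩
    · exact ⟨v, Or.inr ⟨by simp only [e1_apply]; omega, by simp only [e1_apply]; omega⟩⟩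

lemma adj2 (u v : ℤ) : (pg e2).Adj u v ↔
    (u % 2 = 1 ∧ (v = u + 3 ∨ v = u + 5)) ∨ (v % 2 = 1 ∧ (u = v + 3 ∨ u = v + 5)) := by
  constructor
  · rintro ⟨n, ⟨h1, h2⟩ | ⟨h1, h2⟩⟩ <;> simp only [e2_apply] at h1 h2 <;> omega
  · rintro (⟨he, h | h⟩ | ⟨he, h | h⟩)
    · exact ⟨u - 2, Or.inr ⟨by simp only [e2_apply]; omega, by simp only [e2_apply]; omega⟩⟩
    · exact ⟨u - 1, Or.inl ⟨by simp only [e2_apply]; omega, by simp only [e2_apply]; omega⟩⟩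
    · exact ⟨v - 2, Or.inl ⟨by simp only [e2_apply]; omega, by simp only [e2_apply]; omega⟩⟩
    · exact ⟨v - 1, Or.inr ⟨by simp only [e2_apply]; omega, by simp only [e2_apply]; omega⟩⟩

lemma cay_adj (u v : ℤ) : (cay ({1, 3, 5} : Set ℤ)).Adj u v ↔
    u ≠ v ∧ ((u - v = 1 ∨ u - v = 3 ∨ u - v = 5) ∨ (v - u = 1 ∨ v - u = 3 ∨ v - u = 5)) := by
  simp [cay, Set.mem_insert_iff]

lemma disj_of_adj {G H : SimpleGraph ℤ} (h : ∀ u v, G.Adj u v → ¬ H.Adj u v) :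
    Disjoint G.edgeSet H.edgeSet := by
  rw [Set.disjoint_left]
  intro e
  induction e using Sym2.ind with
  | _ u v =>
      intro h1 h2
      exact h u v h1 h2

lemma le0 : pg e0 ≤ cay ({1, 3, 5} : Set ℤ) := by
  intro u v h
  rw [adj0] at h
  rw [cay_adj]
  omega

lemma le1 : pg e1 ≤ cay ({1, 3, 5} : Set ℤ) := by
  intro u v h
  rw [adj1] at h
  rw [cay_adj]
  omega

lemma le2 : pg e2 ≤ cay ({1, 3, 5} : Set ℤ) := by
  intro u v h
  rw [adj2] at h
  rw [cay_adj]
  omega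

theorem stmt19 : HamDecomp (cay ({1, 3, 5} : Set ℤ)) 3 := by
  refine ⟨![pg e0, pg e1, pg e2], ?_, ?_, ?_⟩
  · intro i
    fin_cases i
    · exact ⟨le0, pg_conn e0, pg_deg e0⟩
    · exact ⟨le1, pg_conn e1, pg_deg e1⟩
    · exact ⟨le2, pg_conn e2, pg_deg e2⟩
  · intro i j hij
    fin_cases i <;> fin_cases j
    · exact absurd rfl hij
    · exact disj_of_adj (G := pg e0) (H := pg e1) fun u v h1 h2 => by
        rw [adj0] at h1; rw [adj1] at h2; omega
    · exact disj_of_adj (G := pg e0) (H := pg e2) fun u v h1 h2 => by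
        rw [adj0] at h1; rw [adj2] at h2; omega
    · exact disj_of_adj (G := pg e1) (H := pg e0) fun u v h1 h2 => by
        rw [adj1] at h1; rw [adj0] at h2; omega
    · exact absurd rfl hij
    · exact disj_of_adj (G := pg e1) (H := pg e2) fun u v h1 h2 => by
        rw [adj1] at h1; rw [adj2] at h2; omega
    · exact disj_of_adj (G := pg e2) (H := pg e0) fun u v h1 h2 => by
        rw [adj2] at h1; rw [adj0] at h2; omega
    · exact disj_of_adj (G := pg e2) (H := pg e1) fun u v h1 h2 => by
        rw [adj2] at h1; rw [adj1] at h2; omega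
    · exact absurd rfl hij
  · intro e he
    induction e using Sym2.ind with
    | _ u v =>
        rw [SimpleGraph.mem_edgeSet, cay_adj] at he
        have h : (pg e0).Adj u v ∨ (pg e1).Adj u v ∨ (pg e2).Adj u v := by
          rw [adj0, adj1, adj2]
          omega
        rcases h with h | h | h
        · exact ⟨0, show (pg e0).Adj u v from h⟩
        · exact ⟨1, show (pg e1).Adj u v from h⟩
        · exact ⟨2, show (pg e2).Adj u v from h⟩
end
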